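/- arXiv:1712.01102 — 3 statements merged into one kernel-verified Lean document; each statement's English description precedes it below -/
import Mathlib

section
/- Let m ≥ 1 be a natural number and let β, δ > 0 be real numbers with ρ = β/δ. Then ∫₀^∞ δ·e^{−δt} · ( ∑_{k=0}^{∞} m·(1 − (1 − 1/m)^k) · ((βt)^k e^{−βt} / k!) ) dt = m·ρ/(m + ρ). (This is the stationary mean number of different currently valid coupon types obtained under independent Poisson coupon-selection at rate β and Poisson coupon-type replacement at rate δ.) -/
open MeasureTheory Real

lemma exp_tsum' (x : ℝ) : (∑' k : ℕ, x ^ k / (Nat.factorial k)) = Real.exp x := by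
  rw [Real.exp_eq_exp_ℝ, NormedSpace.exp_eq_tsum_div]

lemma integral_exp_neg_mul_Ioi_zero {b : ℝ} (hb : 0 < b) :
    ∫ x in Set.Ioi (0 : ℝ), Real.exp (-(b * x)) = 1 / b := by
  have h := MeasureTheory.integral_comp_mul_left_Ioi (fun x => Real.exp (-x)) 0 hb
  simp only [mul_zero, integral_exp_neg_Ioi_zero, smul_eq_mul, mul_one] at h
  rw [h, one_div]

lemma aux_tsum (c q a : ℝ) :
    (∑' k : ℕ, c * (1 - q ^ k) * (a ^ k * Real.exp (-a) / (Nat.factorial k)))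
      = c * (1 - Real.exp ((q - 1) * a)) := by
  have h1 : Summable fun k : ℕ => c * Real.exp (-a) * (a ^ k / (Nat.factorial k)) :=
    (Real.summable_pow_div_factorial a).mul_left _
  have h2 : Summable fun k : ℕ => c * Real.exp (-a) * ((q * a) ^ k / (Nat.factorial k)) :=
    (Real.summable_pow_div_factorial (q * a)).mul_left _
  have hterm : ∀ k : ℕ,
      c * (1 - q ^ k) * (a ^ k * Real.exp (-a) / (Nat.factorial k))
        = c * Real.exp (-a) * (a ^ k / (Nat.factorial k))
          - c * Real.exp (-a) * ((q * a) ^ k / (Nat.factorial k)) := by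
    intro k; rw [mul_pow]; ring
  rw [tsum_congr hterm, Summable.tsum_sub h1 h2, tsum_mul_left, tsum_mul_left, exp_tsum', exp_tsum']
  have e1 : Real.exp (-a) * Real.exp a = 1 := by rw [← Real.exp_add]; simp
  have e2 : Real.exp (-a) * Real.exp (q * a) = Real.exp ((q - 1) * a) := by
    rw [← Real.exp_add]; ring_nf
  linear_combination c * e1 - c * e2

/-- Stationary mean number of distinct currently valid coupon types under
Poisson coupon-selection at rate `β` and Poisson full replacement at rate `δ`:
`∫₀^∞ δ e^{−δt} ( ∑ₖ m (1 − (1 − 1/m)^k) (βt)^k e^{−βt}/k! ) dt = mρ/(m+ρ)`,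
`ρ = β/δ`. -/
theorem stmt_4 (m : ℕ) (hm : 1 ≤ m) (β δ : ℝ) (hβ : 0 < β) (hδ : 0 < δ)
    (ρ : ℝ) (hρ : ρ = β / δ) :
    ∫ t in Set.Ioi (0 : ℝ),
        δ * Real.exp (-δ * t) *
          (∑' k : ℕ,
            (m : ℝ) * (1 - (1 - 1 / (m : ℝ)) ^ k) *
              ((β * t) ^ k * Real.exp (-β * t) / (Nat.factorial k)))
      = (m : ℝ) * ρ / ((m : ℝ) + ρ) := by
  have hm0 : (0 : ℝ) < (m : ℝ) := by exact_mod_cast Nat.lt_of_lt_of_le Nat.zero_lt_one hm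
  have hsum : ∀ t : ℝ,
      (∑' k : ℕ, (m : ℝ) * (1 - (1 - 1 / (m : ℝ)) ^ k) *
          ((β * t) ^ k * Real.exp (-β * t) / (Nat.factorial k)))
        = (m : ℝ) * (1 - Real.exp (-(β / m * t))) := by
    intro t
    have h := aux_tsum (m : ℝ) (1 - 1 / (m : ℝ)) (β * t)
    have harg : (1 - 1 / (m : ℝ) - 1) * (β * t) = -(β / m * t) := by
      field_simp
      ring
    rw [harg] at h
    simpa only [neg_mul] using h
  have hint : ∀ t : ℝ,
      δ * Real.exp (-δ * t) *
          (∑' k : ℕ, (m : ℝ) * (1 - (1 - 1 / (m : ℝ)) ^ k) *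
              ((β * t) ^ k * Real.exp (-β * t) / (Nat.factorial k)))
        = (m : ℝ) * δ * Real.exp (-(δ * t))
          - (m : ℝ) * δ * Real.exp (-((δ + β / m) * t)) := by
    intro t
    rw [hsum t, neg_mul]
    have e : Real.exp (-(δ * t)) * Real.exp (-(β / m * t))
        = Real.exp (-((δ + β / m) * t)) := by
      rw [← Real.exp_add]; ring_nf
    linear_combination (-((m : ℝ) * δ)) * e
  simp_rw [hint]
  have hδ2 : 0 < δ + β / m := by positivity
  have I1 : Integrable (fun t => Real.exp (-(δ * t))) (volume.restrict (Set.Ioi (0:ℝ))) := by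
    simpa only [neg_mul] using (exp_neg_integrableOn_Ioi 0 hδ).integrable
  have I2 : Integrable (fun t => Real.exp (-((δ + β / m) * t)))
      (volume.restrict (Set.Ioi (0:ℝ))) := by
    simpa only [neg_mul] using (exp_neg_integrableOn_Ioi 0 hδ2).integrable
  rw [integral_sub ((I1.const_mul _)) ((I2.const_mul _)), integral_const_mul, integral_const_mul,
    integral_exp_neg_mul_Ioi_zero hδ, integral_exp_neg_mul_Ioi_zero hδ2, hρ]
  field_simp
  ring
end

section
/- Let m ≥ 1 be a natural number, let β, δ > 0 be real numbers with ρ = β/δ, and let ℓ be a natural number with 0 ≤ ℓ ≤ m. Define the Stirling number of the second kind S(k, ℓ) = (1/ℓ!) · ∑_{j=0}^{ℓ} (−1)^{ℓ−j} · C(ℓ, j) · j^k, and the falling factorial (m)_ℓ = m(m−1)⋯(m−ℓ+1). Then ∑_{k=0}^{∞} ((m)_ℓ / m^k) · S(k, ℓ) · (ρ/(ρ+1))^k · (1/(ρ+1)) = (m/ρ) · (m)_ℓ / ∏_{i=0}^{ℓ} ( m(ρ+1)/ρ − i ). (This is the stationary distribution P(Y = ℓ) of the number Y of currently valid coupon types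 obtained under Poisson coupon-selection at rate β and Poisson replacement of all coupon types at rate δ.) -/
open MeasureTheory Real Finset

/-- Stirling number of the second kind, via its explicit formula,
as a real number: `S(k, ℓ) = (1/ℓ!) ∑_{j=0}^{ℓ} (−1)^{ℓ−j} C(ℓ, j) j^k`. -/
noncomputable def stirling2 (k ℓ : ℕ) : ℝ :=
  (1 / (Nat.factorial ℓ : ℝ)) *
    ∑ j ∈ Finset.range (ℓ + 1), (-1 : ℝ) ^ (ℓ - j) * (Nat.choose ℓ j : ℝ) * (j : ℝ) ^ k

/-- Falling factorial `(m)_ℓ = m(m−1)⋯(m−ℓ+1)` as a real number. -/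
noncomputable def fallingFact (m ℓ : ℕ) : ℝ :=
  ∏ i ∈ Finset.range ℓ, ((m : ℝ) - (i : ℝ))

lemma partial_frac (ℓ : ℕ) : ∀ y : ℝ, (∀ i ∈ Finset.range (ℓ+1), y - (i:ℝ) ≠ 0) →
    ∑ j ∈ Finset.range (ℓ+1), (-1:ℝ)^(ℓ-j) * (Nat.choose ℓ j : ℝ) * (y - j)⁻¹
      = (Nat.factorial ℓ : ℝ) / ∏ i ∈ Finset.range (ℓ+1), (y - i) := by
  induction ℓ with
  | zero =>
    intro y hy
    simp [Nat.factorial, one_div]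
  | succ ℓ ih =>
    intro y hy
    have hy' : ∀ i ∈ Finset.range (ℓ+1), (y-1) - (i:ℝ) ≠ 0 := by
      intro i hi h
      apply hy (i+1) (by simpa using Nat.succ_lt_succ (Finset.mem_range.mp hi))
      push_cast
      linarith
    have hyy : ∀ i ∈ Finset.range (ℓ+1), y - (i:ℝ) ≠ 0 := fun i hi =>
      hy i (Finset.mem_range.mpr (lt_trans (Finset.mem_range.mp hi) (Nat.lt_succ_self _)))
    have h1 := ih (y-1) hy'
    have h2 := ih y hyy
    -- split LHS
    rw [Finset.sum_range_succ']
    have hsplit : ∀ i ∈ Finset.range (ℓ+1),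
        (-1:ℝ)^(ℓ+1-(i+1)) * (Nat.choose (ℓ+1) (i+1) : ℝ) * (y - (↑(i+1)))⁻¹
          = (-1:ℝ)^(ℓ-i) * (Nat.choose ℓ i : ℝ) * ((y-1) - i)⁻¹
            + (-1:ℝ)^(ℓ-i) * (Nat.choose ℓ (i+1) : ℝ) * (y - (↑(i+1)))⁻¹ := by
      intro i hi
      rw [Nat.succ_sub_succ, Nat.choose_succ_succ]
      push_cast
      have : (y:ℝ) - (↑i + 1) = (y - 1) - i := by ring
      rw [this]
      ring
    rw [Finset.sum_congr rfl hsplit, Finset.sum_add_distrib, h1]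
    -- second sum plus the j=0 term equals -g_ℓ(y)
    have hS2 : ∑ i ∈ Finset.range (ℓ+1), (-1:ℝ)^(ℓ-i) * (Nat.choose ℓ (i+1) : ℝ) * (y - (↑(i+1)))⁻¹
        + (-1:ℝ)^(ℓ+1-0) * (Nat.choose (ℓ+1) 0 : ℝ) * (y - (0:ℕ))⁻¹
        = - ∑ j ∈ Finset.range (ℓ+1), (-1:ℝ)^(ℓ-j) * (Nat.choose ℓ j : ℝ) * (y - j)⁻¹ := by
      rw [Finset.sum_range_succ (fun i => (-1:ℝ)^(ℓ-i) * (Nat.choose ℓ (i+1) : ℝ) * (y - (↑(i+1)))⁻¹),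
        Nat.choose_succ_self, Finset.sum_range_succ' (fun j => (-1:ℝ)^(ℓ-j) * (Nat.choose ℓ j : ℝ) * (y - j)⁻¹)]
      simp only [Nat.cast_zero, Nat.choose_zero_right, Nat.cast_one, Nat.sub_zero, Nat.cast_ofNat]
      rw [neg_add, ← Finset.sum_neg_distrib]
      congr 1
      · simp only [mul_zero, zero_mul, add_zero]
        apply Finset.sum_congr rfl
        intro i hi
        have hil : i < ℓ := Finset.mem_range.mp hi
        have : ℓ - i = (ℓ - (i+1)) + 1 := by omega
        rw [this]
        ring
      · rw [pow_succ]
        ring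
    rw [add_assoc, hS2, h2]
    have hA : (∏ i ∈ Finset.range (ℓ+1), (y - 1 - (i:ℝ))) ≠ 0 :=
      Finset.prod_ne_zero_iff.mpr (by intro i hi; have := hy' i hi; intro h; exact this (by linarith))
    have hB : (∏ i ∈ Finset.range (ℓ+1), (y - (i:ℝ))) ≠ 0 := Finset.prod_ne_zero_iff.mpr hyy
    have hrel : y * ∏ i ∈ Finset.range (ℓ+1), (y - 1 - (i:ℝ))
        = (∏ i ∈ Finset.range (ℓ+1), (y - (i:ℝ))) * (y - ((ℓ:ℝ)+1)) := by
      have e1 : ∏ i ∈ Finset.range (ℓ+2), (y - (i:ℝ)) = y * ∏ i ∈ Finset.range (ℓ+1), (y - 1 - (i:ℝ)) := by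
        rw [Finset.prod_range_succ']
        simp only [Nat.cast_zero, sub_zero]
        rw [mul_comm]
        congr 1
        apply Finset.prod_congr rfl
        intro i _
        push_cast
        ring
      have e2 : ∏ i ∈ Finset.range (ℓ+2), (y - (i:ℝ)) = (∏ i ∈ Finset.range (ℓ+1), (y - (i:ℝ))) * (y - ((ℓ:ℝ)+1)) := by
        rw [Finset.prod_range_succ]
        push_cast
        ring
      rw [← e1, e2]
    have hprodgoal : ∏ i ∈ Finset.range (ℓ+1+1), (y - (i:ℝ)) = y * ∏ i ∈ Finset.range (ℓ+1), (y - 1 - (i:ℝ)) := by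
      rw [hrel, Finset.prod_range_succ]
      push_cast
      ring
    rw [hprodgoal, Nat.factorial_succ]
    have hy0 : y ≠ 0 := by have := hy 0 (by simp); simpa using this
    have hyl : y - ((ℓ:ℝ)+1) ≠ 0 := by
      have := hy (ℓ+1) (by simp)
      intro h; exact this (by push_cast; linarith)
    push_cast
    rw [← sub_eq_add_neg, div_sub_div _ _ hA hB, div_eq_div_iff (mul_ne_zero hA hB) (mul_ne_zero hy0 hA)]
    linear_combination (-(ℓ.factorial:ℝ)) * (∏ i ∈ Finset.range (ℓ+1), (y - 1 - (i:ℝ))) * hrel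

/-- Stationary distribution of the number of currently valid coupon types under
Poisson selection at rate `β` and Poisson full replacement at rate `δ`:
`∑ₖ ((m)_ℓ/m^k) S(k,ℓ) (ρ/(ρ+1))^k /(ρ+1)
 = (m/ρ) (m)_ℓ / ∏_{i=0}^{ℓ} (m(ρ+1)/ρ − i)`. -/
theorem stmt_6 (m : ℕ) (hm : 1 ≤ m) (β δ : ℝ) (hβ : 0 < β) (hδ : 0 < δ)
    (ρ : ℝ) (hρ : ρ = β / δ) (ℓ : ℕ) (hℓ : ℓ ≤ m) :
    ∑' k : ℕ,
        (fallingFact m ℓ / (m : ℝ) ^ k) * stirling2 k ℓ *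
          (ρ / (ρ + 1)) ^ k * (1 / (ρ + 1))
      = ((m : ℝ) / ρ) * fallingFact m ℓ /
          ∏ i ∈ Finset.range (ℓ + 1), ((m : ℝ) * (ρ + 1) / ρ - (i : ℝ)) := by
  have hρ0 : 0 < ρ := by rw [hρ]; exact div_pos hβ hδ
  have hρ1 : (0:ℝ) < ρ + 1 := by linarith
  have hm0 : (0:ℝ) < m := by exact_mod_cast Nat.lt_of_lt_of_le Nat.zero_lt_one hm
  set y : ℝ := (m:ℝ) * (ρ + 1) / ρ with hy
  have hym : (m:ℝ) < y := by
    rw [hy, lt_div_iff₀ hρ0]; nlinarith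
  have hyne : ∀ i ∈ Finset.range (ℓ+1), y - (i:ℝ) ≠ 0 := by
    intro i hi
    have hi' : (i:ℝ) ≤ m := by
      have : i ≤ m := le_trans (Nat.lt_succ_iff.mp (Finset.mem_range.mp hi)) hℓ
      exact_mod_cast this
    have : 0 < y - i := by linarith
    exact ne_of_gt this
  set x : ℝ := ρ / ((ρ + 1) * m) with hx
  have hx0 : 0 < x := div_pos hρ0 (by positivity)
  have hxy : x * y = 1 := by
    rw [hx, hy]; field_simp
  have hjx : ∀ j ∈ Finset.range (ℓ+1), (j:ℝ) * x < 1 := by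
    intro j hj
    have hj' : (j:ℝ) ≤ m := by
      have : j ≤ m := le_trans (Nat.lt_succ_iff.mp (Finset.mem_range.mp hj)) hℓ
      exact_mod_cast this
    have hmx : (m:ℝ) * x < 1 := by
      rw [hx, mul_div_assoc']
      rw [div_lt_one (by positivity)]
      nlinarith
    nlinarith
  set c : ℝ := fallingFact m ℓ * (1/(ρ+1)) * (1/(Nat.factorial ℓ : ℝ)) with hc
  have hf : ∀ k : ℕ,
      (fallingFact m ℓ / (m : ℝ) ^ k) * stirling2 k ℓ * (ρ / (ρ + 1)) ^ k * (1 / (ρ + 1))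
        = c * ∑ j ∈ Finset.range (ℓ+1), (-1:ℝ)^(ℓ-j) * (Nat.choose ℓ j : ℝ) * ((j:ℝ)*x)^k := by
    intro k
    have hmk : ((m:ℝ))^k ≠ 0 := by positivity
    have hρk : (ρ+1)^k ≠ 0 := by positivity
    have hfac : (Nat.factorial ℓ : ℝ) ≠ 0 := by positivity
    simp only [stirling2, hc, Finset.mul_sum, Finset.sum_mul]
    apply Finset.sum_congr rfl
    intro j hj
    rw [mul_pow, hx, div_pow, div_pow, mul_pow]
    field_simp
  rw [tsum_congr hf, tsum_mul_left]
  have hsumm : ∀ j ∈ Finset.range (ℓ+1),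
      Summable (fun k : ℕ => (-1:ℝ)^(ℓ-j) * (Nat.choose ℓ j : ℝ) * ((j:ℝ)*x)^k) := by
    intro j hj
    exact (summable_geometric_of_lt_one (by positivity) (hjx j hj)).mul_left _
  rw [Summable.tsum_finsetSum hsumm]
  have hgeo : ∀ j ∈ Finset.range (ℓ+1),
      ∑' k : ℕ, (-1:ℝ)^(ℓ-j) * (Nat.choose ℓ j : ℝ) * ((j:ℝ)*x)^k
        = (-1:ℝ)^(ℓ-j) * (Nat.choose ℓ j : ℝ) * (y * (y - (j:ℝ))⁻¹) := by
    intro j hj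
    rw [tsum_mul_left, tsum_geometric_of_lt_one (by positivity) (hjx j hj)]
    congr 1
    have h1 : 1 - (j:ℝ)*x = x * (y - j) := by
      rw [mul_sub, hxy]; ring
    rw [h1, mul_inv, inv_eq_of_mul_eq_one_right hxy]
  rw [Finset.sum_congr rfl hgeo]
  have : ∑ j ∈ Finset.range (ℓ+1), (-1:ℝ)^(ℓ-j) * (Nat.choose ℓ j : ℝ) * (y * (y - (j:ℝ))⁻¹)
      = y * ∑ j ∈ Finset.range (ℓ+1), (-1:ℝ)^(ℓ-j) * (Nat.choose ℓ j : ℝ) * (y - (j:ℝ))⁻¹ := by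
    rw [Finset.mul_sum]
    apply Finset.sum_congr rfl
    intro j hj
    ring
  rw [this, partial_frac ℓ y hyne]
  have hprod : (∏ i ∈ Finset.range (ℓ+1), (y - (i:ℝ))) ≠ 0 := Finset.prod_ne_zero_iff.mpr hyne
  have hfac : (Nat.factorial ℓ : ℝ) ≠ 0 := by positivity
  rw [hc]
  field_simp
  rw [hy]
  field_simp
end

section
/- Let m ≥ 1 be a natural number, let β, δ > 0 be real numbers with ρ = β/δ, and let y₀ ≥ 0 be a real number. Then ∫₀^∞ δ·e^{−δt} · ( ∑_{k=0}^{∞} [ m·(1 − (1 − 1/m)^k) + (1 − 1/m)^k · y₀ ] · ((βt)^k e^{−βt} / k!) ) dt = m·ρ/(m + ρ) + (m/(m + ρ))·y₀. That is, if the collector starts a replacement cycle already holding an expected number y₀ of valid coupon types, then the expected number of valid types held at the end of the exponential(δ) cycle, under rate-β Poisson selection, equals mρ/(m+ρ) + (m/(m+ρ))·y₀. -/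
open MeasureTheory Real

lemma integral_exp_neg_mul (c : ℝ) (hc : 0 < c) :
    (∫ t in Set.Ioi (0 : ℝ), Real.exp (-(c * t))) = 1 / c := by
  have h := MeasureTheory.integral_comp_mul_left_Ioi (fun x => Real.exp (-x)) 0 hc
  simp only [mul_zero] at h
  rw [h, integral_exp_neg_Ioi_zero, smul_eq_mul, mul_one, one_div]

/-- Starting a replacement cycle holding an expected number `y₀` of valid types,
the expected number held at the end of an `Exp(δ)` cycle under rate-`β` Poisson
selection from `m` types is `mρ/(m+ρ) + (m/(m+ρ)) y₀`, where `ρ = β/δ`. -/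
theorem stmt_7 (m : ℕ) (hm : 1 ≤ m) (β δ : ℝ) (hβ : 0 < β) (hδ : 0 < δ)
    (ρ : ℝ) (hρ : ρ = β / δ) (y₀ : ℝ) (hy₀ : 0 ≤ y₀) :
    ∫ t in Set.Ioi (0 : ℝ),
        δ * Real.exp (-δ * t) *
          (∑' k : ℕ,
            ((m : ℝ) * (1 - (1 - 1 / (m : ℝ)) ^ k) + (1 - 1 / (m : ℝ)) ^ k * y₀) *
              ((β * t) ^ k * Real.exp (-β * t) / (Nat.factorial k)))
      = (m : ℝ) * ρ / ((m : ℝ) + ρ) + ((m : ℝ) / ((m : ℝ) + ρ)) * y₀ := by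
  have hm0 : (0 : ℝ) < (m : ℝ) := by exact_mod_cast hm
  set q : ℝ := 1 - 1 / (m : ℝ) with hq
  -- Step 1: closed form of the inner sum
  have hsum : ∀ t : ℝ, (∑' k : ℕ,
      ((m : ℝ) * (1 - q ^ k) + q ^ k * y₀) *
        ((β * t) ^ k * Real.exp (-β * t) / (Nat.factorial k)))
      = (m : ℝ) + (y₀ - m) * Real.exp (-(β / m * t)) := by
    intro t
    have hterm : ∀ k : ℕ,
        ((m : ℝ) * (1 - q ^ k) + q ^ k * y₀) *
          ((β * t) ^ k * Real.exp (-β * t) / (Nat.factorial k))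
        = (m : ℝ) * Real.exp (-β * t) * ((β * t) ^ k / (Nat.factorial k))
          + (y₀ - m) * Real.exp (-β * t) * ((q * (β * t)) ^ k / (Nat.factorial k)) := by
      intro k
      have hp : (q * (β * t)) ^ k = q ^ k * (β * t) ^ k := mul_pow _ _ _
      rw [hp]; ring
    have hs1 : Summable (fun k : ℕ => (m : ℝ) * Real.exp (-β * t) * ((β * t) ^ k / (Nat.factorial k))) :=
      (Real.summable_pow_div_factorial (β * t)).mul_left _
    have hs2 : Summable (fun k : ℕ => (y₀ - m) * Real.exp (-β * t) * ((q * (β * t)) ^ k / (Nat.factorial k))) :=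
      (Real.summable_pow_div_factorial (q * (β * t))).mul_left _
    have e1 : Real.exp (-β * t) * Real.exp (β * t) = 1 := by
      rw [← Real.exp_add]; simp
    have e2 : Real.exp (-β * t) * Real.exp (q * (β * t)) = Real.exp (-(β / m * t)) := by
      rw [← Real.exp_add]; congr 1; rw [hq]; field_simp; ring
    calc (∑' k : ℕ, ((m : ℝ) * (1 - q ^ k) + q ^ k * y₀) *
          ((β * t) ^ k * Real.exp (-β * t) / (Nat.factorial k)))
        = ∑' k : ℕ, ((m : ℝ) * Real.exp (-β * t) * ((β * t) ^ k / (Nat.factorial k))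
            + (y₀ - m) * Real.exp (-β * t) * ((q * (β * t)) ^ k / (Nat.factorial k))) :=
          tsum_congr hterm
      _ = (m : ℝ) * Real.exp (-β * t) * Real.exp (β * t)
            + (y₀ - m) * Real.exp (-β * t) * Real.exp (q * (β * t)) := by
          rw [Summable.tsum_add hs1 hs2, tsum_mul_left, tsum_mul_left, exp_tsum', exp_tsum']
      _ = (m : ℝ) + (y₀ - m) * Real.exp (-(β / m * t)) := by
          rw [mul_assoc, e1, mul_one, mul_assoc, e2]
  -- Step 2: rewrite the integrand
  have key : ∀ t : ℝ, δ * Real.exp (-δ * t) * ((m : ℝ) + (y₀ - m) * Real.exp (-(β / m * t)))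
      = ((m : ℝ) * δ) * Real.exp (-(δ * t)) + ((y₀ - m) * δ) * Real.exp (-((δ + β / m) * t)) := by
    intro t
    have e3 : Real.exp (-δ * t) * Real.exp (-(β / m * t)) = Real.exp (-((δ + β / m) * t)) := by
      rw [← Real.exp_add]; congr 1; ring
    have e4 : Real.exp (-δ * t) = Real.exp (-(δ * t)) := by congr 1; ring
    calc δ * Real.exp (-δ * t) * ((m : ℝ) + (y₀ - m) * Real.exp (-(β / m * t)))
        = ((m : ℝ) * δ) * Real.exp (-δ * t)
            + ((y₀ - m) * δ) * (Real.exp (-δ * t) * Real.exp (-(β / m * t))) := by ring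
      _ = ((m : ℝ) * δ) * Real.exp (-(δ * t)) + ((y₀ - m) * δ) * Real.exp (-((δ + β / m) * t)) := by
          rw [e3, e4]
  have hcongr : ∫ t in Set.Ioi (0 : ℝ),
        δ * Real.exp (-δ * t) *
          (∑' k : ℕ, ((m : ℝ) * (1 - q ^ k) + q ^ k * y₀) *
              ((β * t) ^ k * Real.exp (-β * t) / (Nat.factorial k)))
      = ∫ t in Set.Ioi (0 : ℝ),
          ((m : ℝ) * δ) * Real.exp (-(δ * t))
            + ((y₀ - m) * δ) * Real.exp (-((δ + β / m) * t)) := by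
    apply integral_congr_ae
    filter_upwards with t
    rw [hsum t, key t]
  have hrate : (0 : ℝ) < δ + β / m := by positivity
  have hint1 : IntegrableOn (fun t : ℝ => Real.exp (-(δ * t))) (Set.Ioi (0:ℝ)) := by
    simpa only [neg_mul] using exp_neg_integrableOn_Ioi (0:ℝ) hδ
  have hint2 : IntegrableOn (fun t : ℝ => Real.exp (-((δ + β / m) * t))) (Set.Ioi (0:ℝ)) := by
    simpa only [neg_mul] using exp_neg_integrableOn_Ioi (0:ℝ) hrate
  rw [hcongr, integral_add ((hint1.const_mul _)) ((hint2.const_mul _)),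
    integral_const_mul, integral_const_mul, integral_exp_neg_mul δ hδ,
    integral_exp_neg_mul _ hrate]
  rw [hρ]
  have hmδ : (m : ℝ) * δ + β ≠ 0 := by positivity
  field_simp
  ring
end
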